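/- Let k ∈ ℕ. Then there exists a function F : ℂ → ℂ, holomorphic on ℂ ∖ {(1−k)/2}, such that F(s) = Σ_{n=1}^∞ (2/(nλ(1−x)+2))^{2s} · (xₙ − 1)^k for all s ∈ ℂ with Re s > 1/2, and such that s ↦ (s − (1−k)/2)·F(s) extends to an entire function. (The untwisted parabolic part of the fast transfer operator, evaluated on the monomial (z−1)^k at a real point, extends meromorphically to ℂ with at most a simple pole, located at s = (1−k)/2.) -/

import Mathlib

open Complex HurwitzZeta Finset

lemma hz_entire (a : UnitAddCircle) :
    Differentiable ℂ (fun w : ℂ => hurwitzZeta a w - 1 / (w - 1) / Gammaℝ w) := by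
  intro w
  rcases eq_or_ne w 1 with h | h
  · subst h; exact differentiableAt_hurwitzZeta_sub_one_div a
  · refine (differentiableAt_hurwitzZeta a h).sub ?_
    have h2 : ∀ z : ℂ, 1 / (z - 1) / Gammaℝ z = (z - 1)⁻¹ * (Gammaℝ z)⁻¹ := by
      intro z; rw [one_div, div_eq_mul_inv]
    simp only [h2]
    exact (((differentiableAt_id (x := w)).sub_const (1:ℂ)).inv (sub_ne_zero.2 h)).mul
      (differentiable_Gammaℝ_inv w)

theorem parabolic_part_monomial_meromorphic
    (lam : ℝ) (hlam : 0 < lam) (x : ℝ) (hx : x < 1) (k : ℕ) :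
    ∃ F : ℂ → ℂ,
      (∀ s : ℂ, s ≠ (1 - (k : ℂ)) / 2 → DifferentiableAt ℂ F s) ∧
      (∀ s : ℂ, 1 / 2 < s.re →
        F s = ∑' n : ℕ,
          (((2 / (((n : ℝ) + 1) * lam * (1 - x) + 2)) : ℝ) : ℂ) ^ (2 * s) *
            (((((2 - ((n : ℝ) + 1) * lam) * x + ((n : ℝ) + 1) * lam) /
                  (((n : ℝ) + 1) * lam * (1 - x) + 2) - 1) ^ k : ℝ) : ℂ)) ∧
      ∃ G : ℂ → ℂ, Differentiable ℂ G ∧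
        ∀ s : ℂ, s ≠ (1 - (k : ℂ)) / 2 → G s = (s - (1 - (k : ℂ)) / 2) * F s := by
  have hx1 : (0:ℝ) < 1 - x := by linarith
  set c : ℝ := lam * (1 - x) / 2 with hc
  have hc0 : 0 < c := by positivity
  set a0 : ℝ := 1 / c with ha0def
  have ha0 : 0 < a0 := by positivity
  set N : ℕ := ⌈a0⌉₊ with hN
  have hN1 : a0 ≤ (N : ℝ) := Nat.le_ceil a0
  have hN2 : (N : ℝ) < a0 + 1 := Nat.ceil_lt_add_one ha0.le
  set a : ℝ := 1 + a0 - N with hadef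
  have ha1 : 0 < a := by simp only [hadef]; linarith
  have ha2 : a ≤ 1 := by simp only [hadef]; linarith
  have hNa : (N : ℝ) + a = 1 + a0 := by simp only [hadef]; ring
  set S : ℂ → ℂ := fun w => ∑ j ∈ range N, 1 / ((j : ℂ) + (a : ℂ)) ^ w with hSdef
  have hbase : ∀ j : ℕ, ((j : ℂ) + (a : ℂ)) ≠ 0 := by
    intro j h
    have h0 : (0:ℝ) < (j : ℝ) + a := by positivity
    have := congrArg Complex.re h
    simp at this
    linarith
  have hSdiff : Differentiable ℂ S := by
    rw [hSdef]
    refine Differentiable.fun_sum fun j _ => ?_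
    simp only [one_div]
    exact (differentiable_id.const_cpow (Or.inl (hbase j))).inv
      (fun w => by simp [Complex.cpow_eq_zero_iff, hbase j])
  set E : ℂ → ℂ := fun w => hurwitzZeta (a : UnitAddCircle) w - 1 / (w - 1) / Gammaℝ w
    with hEdef
  have hEdiff : Differentiable ℂ E := hz_entire _
  have hlin : Differentiable ℂ (fun s : ℂ => 2 * s + (k : ℂ)) :=
    (differentiable_id.const_mul 2).add_const _
  have ha0ne : ((a0 : ℝ) : ℂ) ≠ 0 := ofReal_ne_zero.2 ha0.ne'
  have hpow : Differentiable ℂ (fun s : ℂ => ((a0 : ℝ) : ℂ) ^ (2 * s + (k : ℂ))) :=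
    hlin.const_cpow (Or.inl ha0ne)
  set C : ℂ := ((x - 1 : ℝ) : ℂ) ^ k with hCdef
  set F : ℂ → ℂ := fun s => C * ((a0 : ℝ) : ℂ) ^ (2 * s + (k : ℂ)) *
    (hurwitzZeta (a : UnitAddCircle) (2 * s + (k : ℂ)) - S (2 * s + (k : ℂ))) with hFdef
  set G : ℂ → ℂ := fun s => C * ((a0 : ℝ) : ℂ) ^ (2 * s + (k : ℂ)) *
    ((s - (1 - (k : ℂ)) / 2) * (E (2 * s + (k : ℂ)) - S (2 * s + (k : ℂ))) +
      (Gammaℝ (2 * s + (k : ℂ)))⁻¹ / 2) with hGdef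
  have hwne : ∀ s : ℂ, s ≠ (1 - (k : ℂ)) / 2 → 2 * s + (k : ℂ) ≠ 1 := by
    intro s hs h
    apply hs
    linear_combination h / 2
  refine ⟨F, ?_, ?_, G, ?_, ?_⟩
  · -- differentiability of F away from the pole
    intro s hs
    have hw := hwne s hs
    rw [hFdef]
    exact ((differentiableAt_const C).mul (hpow s)).mul
      (((differentiableAt_hurwitzZeta (a : UnitAddCircle) hw).comp (f := fun s : ℂ => 2 * s + (k : ℂ)) s (hlin s)).sub
        ((hSdiff _).comp (f := fun s : ℂ => 2 * s + (k : ℂ)) s (hlin s)))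
  · -- the sum formula
    intro s hs
    set w : ℂ := 2 * s + (k : ℂ) with hwdef
    have hw : 1 < w.re := by
      have hre : w.re = 2 * s.re + (k : ℝ) := by
        simp [hwdef, Complex.add_re, Complex.mul_re]
      rw [hre]
      have : (0:ℝ) ≤ (k : ℝ) := Nat.cast_nonneg k
      linarith
    have H1 : HasSum (fun n : ℕ => 1 / ((n : ℂ) + (a : ℂ)) ^ w)
        (hurwitzZeta (a : UnitAddCircle) w) :=
      hasSum_hurwitzZeta_of_one_lt_re ⟨ha1.le, ha2⟩ hw
    have H2 : HasSum (fun n : ℕ => 1 / (((n + N : ℕ) : ℂ) + (a : ℂ)) ^ w)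
        (hurwitzZeta (a : UnitAddCircle) w - S w) := by
      refine (hasSum_nat_add_iff (f := fun n : ℕ => 1 / ((n : ℂ) + (a : ℂ)) ^ w) N).mpr ?_
      have h' : hurwitzZeta (a : UnitAddCircle) w - S w +
          ∑ i ∈ range N, 1 / ((i : ℂ) + (a : ℂ)) ^ w = hurwitzZeta (a : UnitAddCircle) w := by
        rw [hSdef]; ring
      rw [h']
      exact H1
    have hNaC : ((N : ℕ) : ℂ) + (a : ℂ) = 1 + ((a0 : ℝ) : ℂ) := by
      have := congrArg (fun r : ℝ => (r : ℂ)) hNa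
      push_cast at this
      exact this
    have hcast : ∀ n : ℕ, ((((n : ℝ) + 1 + a0 : ℝ)) : ℂ) = ((n + N : ℕ) : ℂ) + (a : ℂ) := by
      intro n
      have hr : ((n : ℝ) + 1 + a0) = ((n + N : ℕ) : ℝ) + a := by push_cast; linarith
      calc ((((n : ℝ) + 1 + a0 : ℝ)) : ℂ) = ((((n + N : ℕ) : ℝ) + a : ℝ) : ℂ) := by rw [hr]
        _ = ((n + N : ℕ) : ℂ) + (a : ℂ) := by push_cast; ring
    have H3 : HasSum (fun n : ℕ => C * ((a0 : ℝ) : ℂ) ^ w *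
        (1 / ((((n : ℝ) + 1 + a0 : ℝ)) : ℂ) ^ w)) (F s) := by
      have h4 := H2.mul_left (C * ((a0 : ℝ) : ℂ) ^ w)
      simp only [hcast]
      rw [hFdef]
      exact h4
    rw [← H3.tsum_eq]
    refine tsum_congr fun n => ?_
    have ht : (0:ℝ) < (n:ℝ) + 1 := by positivity
    set t : ℝ := (n:ℝ) + 1 with htdef
    set d : ℝ := t * lam * (1 - x) + 2 with hddef
    have hd0 : (0:ℝ) < d := by
      have h1 : 0 < t * lam * (1 - x) := by
        apply mul_pos (mul_pos ht hlam) hx1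
      simp only [hddef]; linarith
    set q : ℝ := 2 / d with hqdef
    have hq0 : (0:ℝ) < q := div_pos two_pos hd0
    have h1 : ((2 - t * lam) * x + t * lam) - d = 2 * x - 2 := by
      simp only [hddef]; ring
    have hnum : ((2 - t * lam) * x + t * lam) / d - 1 = (x - 1) * q := by
      calc ((2 - t * lam) * x + t * lam) / d - 1
          = (((2 - t * lam) * x + t * lam) - d) / d := by
            rw [sub_div, div_self hd0.ne']
        _ = (2 * x - 2) / d := by rw [h1]
        _ = (x - 1) * (2 / d) := by ring
        _ = (x - 1) * q := by rw [hqdef]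
    rw [hnum]
    set B : ℝ := t + a0 with hBdef
    have hB0 : (0:ℝ) < B := by simp only [hBdef]; linarith
    have hct : (0:ℝ) < c * t + 1 := by nlinarith [mul_pos hc0 ht]
    have hdc : d = 2 * (c * t + 1) := by simp only [hddef, hc]; ring
    have hqB : q * B = a0 := by
      have hcne : c ≠ 0 := hc0.ne'
      have hctne : c * t + 1 ≠ 0 := hct.ne'
      rw [hqdef, hdc, hBdef, ha0def]
      field_simp
      try ring
      try exact Or.inl trivial
    have hcast2 : ((((x - 1) * q) ^ k : ℝ) : ℂ) = C * ((q : ℝ) : ℂ) ^ k := by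
      rw [mul_pow, ofReal_mul, ofReal_pow, ofReal_pow, hCdef]
    rw [hcast2]
    have hqne : ((q : ℝ) : ℂ) ≠ 0 := ofReal_ne_zero.2 hq0.ne'
    have hqpow : ((q : ℝ) : ℂ) ^ (2 * s) * ((q : ℝ) : ℂ) ^ (k : ℕ) = ((q : ℝ) : ℂ) ^ w := by
      rw [← Complex.cpow_natCast, ← Complex.cpow_add _ _ hqne, hwdef]
    have hBne : ((B : ℝ) : ℂ) ≠ 0 := ofReal_ne_zero.2 hB0.ne'
    have hBwne : ((B : ℝ) : ℂ) ^ w ≠ 0 := by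
      simp [Complex.cpow_eq_zero_iff, hBne]
    have hqw : ((q : ℝ) : ℂ) ^ w = ((a0 : ℝ) : ℂ) ^ w / ((B : ℝ) : ℂ) ^ w := by
      rw [eq_div_iff hBwne, ← Complex.mul_cpow_ofReal_nonneg hq0.le hB0.le]
      norm_cast
      rw [hqB]
    calc C * ((a0 : ℝ) : ℂ) ^ w * (1 / ((B : ℝ) : ℂ) ^ w)
        = C * (((a0 : ℝ) : ℂ) ^ w / ((B : ℝ) : ℂ) ^ w) := by ring
      _ = C * ((q : ℝ) : ℂ) ^ w := by rw [hqw]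
      _ = ((q : ℝ) : ℂ) ^ (2 * s) * (C * ((q : ℝ) : ℂ) ^ (k : ℕ)) := by
          rw [← hqpow]; ring
  · -- G is entire
    rw [hGdef]
    exact ((differentiable_const C).mul hpow).mul
      (((differentiable_id.sub_const _).mul ((hEdiff.comp hlin).sub (hSdiff.comp hlin))).add
        ((differentiable_Gammaℝ_inv.comp hlin).div_const 2))
  · -- relation between G and F
    intro s hs
    have hw := hwne s hs
    have h0 : 2 * s + (k : ℂ) - 1 ≠ 0 := sub_ne_zero.2 hw
    have hkey : (s - (1 - (k : ℂ)) / 2) * (1 / (2 * s + (k : ℂ) - 1)) = 1 / 2 := by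
      rw [mul_one_div, div_eq_iff h0]
      ring
    simp only [hGdef, hFdef, hEdef]
    linear_combination (-(C * ((a0 : ℝ) : ℂ) ^ (2 * s + (k : ℂ)) *
      (Gammaℝ (2 * s + (k : ℂ)))⁻¹)) * hkey
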